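/- Let a, c, ε₁, ε₂ be real numbers and let ω ∈ ℂ satisfy |ω| = 1. Then every eigenvalue μ ∈ ℂ of the 2×2 complex matrix A + ω·B + ω⁻¹·C satisfies |μ| ≤ λ_eff, where λ_eff = (1/4)·(|a| + |c| + √((|a| − |c|)² + 4|ε₁||ε₂|))². -/

import Mathlib

open Matrix

/-- The matrix `A = [[ε₁ε₂, cε₂], [aε₁, ε₁ε₂]]` regarded as a complex matrix. -/
noncomputable def Amat (a c e1 e2 : ℝ) : Matrix (Fin 2) (Fin 2) ℂ :=
  !![((e1 * e2 : ℝ) : ℂ), ((c * e2 : ℝ) : ℂ); ((a * e1 : ℝ) : ℂ), ((e1 * e2 : ℝ) : ℂ)]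

/-- The matrix `B = [[c², 0], [cε₁, 0]]` regarded as a complex matrix. -/
noncomputable def Bmat (a c e1 e2 : ℝ) : Matrix (Fin 2) (Fin 2) ℂ :=
  !![((c ^ 2 : ℝ) : ℂ), 0; ((c * e1 : ℝ) : ℂ), 0]

/-- The matrix `C = [[0, aε₂], [0, a²]]` regarded as a complex matrix. -/
noncomputable def Cmat (a c e1 e2 : ℝ) : Matrix (Fin 2) (Fin 2) ℂ :=
  !![0, ((a * e2 : ℝ) : ℂ); 0, ((a ^ 2 : ℝ) : ℂ)]

/-- for `|ω| = 1`, every eigenvalue `μ` of `A + ωB + ω⁻¹C`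
satisfies `|μ| ≤ λ_eff = (|a| + |c| + √((|a|−|c|)² + 4|ε₁||ε₂|))²/4`. -/
theorem stmt8 (a c e1 e2 : ℝ) (ω : ℂ) (hω : ‖ω‖ = 1) :
    ∀ μ ∈ spectrum ℂ (Amat a c e1 e2 + ω • Bmat a c e1 e2 + ω⁻¹ • Cmat a c e1 e2),
      ‖μ‖ ≤
        (1 / 4) * (|a| + |c| + Real.sqrt ((|a| - |c|) ^ 2 + 4 * |e1| * |e2|)) ^ 2 := by
  intro μ hμ
  rw [spectrum.mem_iff] at hμ
  have hdet : (algebraMap ℂ (Matrix (Fin 2) (Fin 2) ℂ) μ -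
      (Amat a c e1 e2 + ω • Bmat a c e1 e2 + ω⁻¹ • Cmat a c e1 e2)).det = 0 := by
    by_contra h
    exact hμ ((Matrix.isUnit_iff_isUnit_det _).mpr (isUnit_iff_ne_zero.mpr h))
  simp [Amat, Bmat, Cmat, Matrix.det_fin_two, Matrix.algebraMap_matrix_apply] at hdet
  have key : (μ - ((e1*e2 : ℝ) + ω*(c^2:ℝ)))*(μ - ((e1*e2:ℝ) + ω⁻¹*(a^2:ℝ)))
      = ((c*e2:ℝ) + ω⁻¹*(a*e2:ℝ))*((a*e1:ℝ) + ω*(c*e1:ℝ)) := by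
    push_cast at hdet ⊢
    linear_combination hdet
  -- notation
  set A := |a| with hA
  set C := |c| with hC
  set E := |e1| * |e2| with hE
  set S := Real.sqrt ((A - C) ^ 2 + 4 * |e1| * |e2|) with hSdef
  have hE0 : 0 ≤ E := mul_nonneg (abs_nonneg _) (abs_nonneg _)
  have hA0 : 0 ≤ A := abs_nonneg _
  have hC0 : 0 ≤ C := abs_nonneg _
  have hS0 : 0 ≤ S := Real.sqrt_nonneg _
  have hS2 : S ^ 2 = (A - C) ^ 2 + 4 * E := by
    rw [hSdef, Real.sq_sqrt (by positivity)]; ring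
  have hωinv : ‖ω⁻¹‖ = 1 := by rw [norm_inv, hω]; norm_num
  set x := ‖μ‖ with hx
  by_contra hcon
  push_neg at hcon
  -- basic facts: λ ≥ E + A² and λ ≥ E + C²
  have hSge1 : A - C ≤ S ∧ C - A ≤ S := by
    constructor <;> nlinarith [sq_nonneg (S - (A - C)), sq_nonneg (S + (A - C))]
  have hq1 : 0 ≤ (A + C) * (S - (A - C)) :=
    mul_nonneg (add_nonneg hA0 hC0) (by linarith [hSge1.1])
  have hq2 : 0 ≤ (A + C) * (S + (A - C)) :=
    mul_nonneg (add_nonneg hA0 hC0) (by linarith [hSge1.2])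
  have hidA : (1/4) * (A + C + S) ^ 2 - (E + A ^ 2) = (A + C) * (S - (A - C)) / 2 := by
    linear_combination (1/4) * hS2
  have hidC : (1/4) * (A + C + S) ^ 2 - (E + C ^ 2) = (A + C) * (S + (A - C)) / 2 := by
    linear_combination (1/4) * hS2
  have hl1 : E + A ^ 2 ≤ (1/4) * (A + C + S) ^ 2 := by linarith
  have hl2 : E + C ^ 2 ≤ (1/4) * (A + C + S) ^ 2 := by linarith
  -- abs of both sides of key
  have habs := congrArg (‖·‖) key
  rw [norm_mul, norm_mul] at habs
  -- RHS bound
  have hr1 : ‖(c*e2:ℝ) + ω⁻¹*(a*e2:ℝ)‖ ≤ C * |e2| + A * |e2| := by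
    calc ‖(c*e2:ℝ) + ω⁻¹*(a*e2:ℝ)‖
        ≤ ‖((c*e2:ℝ):ℂ)‖ + ‖ω⁻¹*(a*e2:ℝ)‖ := norm_add_le _ _
      _ = |c*e2| + |a*e2| := by rw [norm_mul, hωinv, Complex.norm_real, Complex.norm_real, Real.norm_eq_abs, Real.norm_eq_abs]; ring
      _ = C * |e2| + A * |e2| := by rw [abs_mul, abs_mul]
  have hr2 : ‖(a*e1:ℝ) + ω*(c*e1:ℝ)‖ ≤ A * |e1| + C * |e1| := by
    calc ‖(a*e1:ℝ) + ω*(c*e1:ℝ)‖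
        ≤ ‖((a*e1:ℝ):ℂ)‖ + ‖ω*(c*e1:ℝ)‖ := norm_add_le _ _
      _ = |a*e1| + |c*e1| := by rw [norm_mul, hω, Complex.norm_real, Complex.norm_real, Real.norm_eq_abs, Real.norm_eq_abs]; ring
      _ = A * |e1| + C * |e1| := by rw [abs_mul, abs_mul]
  -- LHS lower bounds
  have hm00 : ‖(e1*e2:ℝ) + ω*(c^2:ℝ)‖ ≤ E + C ^ 2 := by
    calc ‖(e1*e2:ℝ) + ω*(c^2:ℝ)‖
        ≤ ‖((e1*e2:ℝ):ℂ)‖ + ‖ω*(c^2:ℝ)‖ := norm_add_le _ _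
      _ = |e1*e2| + |c^2| := by rw [norm_mul, hω, Complex.norm_real, Complex.norm_real, Real.norm_eq_abs, Real.norm_eq_abs]; ring
      _ = E + C ^ 2 := by rw [abs_mul, abs_pow]
  have hm11 : ‖(e1*e2:ℝ) + ω⁻¹*(a^2:ℝ)‖ ≤ E + A ^ 2 := by
    calc ‖(e1*e2:ℝ) + ω⁻¹*(a^2:ℝ)‖
        ≤ ‖((e1*e2:ℝ):ℂ)‖ + ‖ω⁻¹*(a^2:ℝ)‖ := norm_add_le _ _
      _ = |e1*e2| + |a^2| := by rw [norm_mul, hωinv, Complex.norm_real, Complex.norm_real, Real.norm_eq_abs, Real.norm_eq_abs]; ring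
      _ = E + A ^ 2 := by rw [abs_mul, abs_pow]
  have hl00 : x - (E + C ^ 2) ≤ ‖μ - ((e1*e2:ℝ) + ω*(c^2:ℝ))‖ := by
    have := (le_abs_self (‖μ‖ - ‖(e1*e2:ℝ) + ω*(c^2:ℝ)‖)).trans
      (abs_norm_sub_norm_le μ ((e1*e2:ℝ) + ω*(c^2:ℝ)))
    linarith [this, hm00]
  have hl11 : x - (E + A ^ 2) ≤ ‖μ - ((e1*e2:ℝ) + ω⁻¹*(a^2:ℝ))‖ := by
    have := (le_abs_self (‖μ‖ - ‖(e1*e2:ℝ) + ω⁻¹*(a^2:ℝ)‖)).trans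
      (abs_norm_sub_norm_le μ ((e1*e2:ℝ) + ω⁻¹*(a^2:ℝ)))
    linarith [this, hm11]
  -- combine
  have hp00 : (0:ℝ) < x - (E + C ^ 2) := by linarith
  have hp11 : (0:ℝ) < x - (E + A ^ 2) := by linarith
  have hcomb : (x - (E + C ^ 2)) * (x - (E + A ^ 2)) ≤ (C * |e2| + A * |e2|) * (A * |e1| + C * |e1|) := by
    calc (x - (E + C ^ 2)) * (x - (E + A ^ 2))
        ≤ ‖μ - ((e1*e2:ℝ) + ω*(c^2:ℝ))‖ * ‖μ - ((e1*e2:ℝ) + ω⁻¹*(a^2:ℝ))‖ :=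
          mul_le_mul hl00 hl11 hp11.le (norm_nonneg _)
      _ = ‖(c*e2:ℝ) + ω⁻¹*(a*e2:ℝ)‖ * ‖(a*e1:ℝ) + ω*(c*e1:ℝ)‖ := habs
      _ ≤ (C * |e2| + A * |e2|) * (A * |e1| + C * |e1|) :=
          mul_le_mul hr1 hr2 (norm_nonneg _) (by positivity)
  -- final contradiction: (x-(E+C²))(x-(E+A²)) > E(A+C)² when x > λ
  have hRHS : (C * |e2| + A * |e2|) * (A * |e1| + C * |e1|) = E * (A + C) ^ 2 := by
    rw [hE]; ring
  rw [hRHS] at hcomb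
  have hprod : ((1/4) * (A + C + S) ^ 2 - (E + C ^ 2)) * ((1/4) * (A + C + S) ^ 2 - (E + A ^ 2))
      = E * (A + C) ^ 2 := by
    rw [hidA, hidC]
    linear_combination ((A + C) ^ 2 / 4) * hS2
  have hstep : ((1/4) * (A + C + S) ^ 2 - (E + C ^ 2)) * ((1/4) * (A + C + S) ^ 2 - (E + A ^ 2))
      < (x - (E + C ^ 2)) * (x - (E + A ^ 2)) :=
    mul_lt_mul'' (by linarith) (by linarith) (by linarith [hidC, hq2]) (by linarith [hidA, hq1])
  rw [hprod] at hstep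
  linarith
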